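/- Let F be an ℓ-disjoint (k,d)-CSP, and call a variable x frequent if deg(x,F) > d^k/(e·d^{ℓ-1}·k). If the number of frequent variables is at most (d^k/(e·d^{ℓ-1}·k))^{1/(ℓ-1)}, then F is satisfiable. -/

import Mathlib

set_option maxHeartbeats 1000000

open Finset

/-- Analytic helper: `(1+1/n)^n ≤ e`. -/
lemma csp_pow_le_exp (n : ℕ) (hn : 1 ≤ n) :
    (1 + 1 / (n : ℝ)) ^ n ≤ Real.exp 1 := by
  have hn0 : (0:ℝ) < n := by exact_mod_cast hn
  have h1 : (1 + 1 / (n:ℝ)) ≤ Real.exp (1 / n) := by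
    have := Real.add_one_le_exp (1 / (n:ℝ)); linarith
  have h2 : (1 + 1 / (n:ℝ)) ^ n ≤ (Real.exp (1 / n)) ^ n := by
    apply pow_le_pow_left₀ (by positivity) h1
  calc (1 + 1 / (n:ℝ)) ^ n ≤ (Real.exp (1/n)) ^ n := h2
    _ = Real.exp ((n : ℝ) * (1/n)) := by rw [← Real.exp_nat_mul]
    _ = Real.exp 1 := by rw [mul_one_div, div_self (ne_of_gt hn0)]

/-- Base satisfiability lemma (Lovász-local-lemma-style counting, self-contained):
a CSP with constraints on exactly `k` distinct variables, one forbidden value each,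
is satisfiable if every variable degree is at most `d^k/(e·k)`. -/
theorem csp_base {V : Type*} [DecidableEq V] (d k : ℕ) (hd : 2 ≤ d) (hk : 1 ≤ k)
    (G : Finset (Finset (V × Fin d)))
    (hGcard : ∀ C ∈ G, (C.image Prod.fst).card = k)
    (hdeg : ∀ x : V, ((G.filter (fun D => x ∈ D.image Prod.fst)).card : ℝ)
      ≤ (d : ℝ) ^ k / (Real.exp 1 * k)) :
    ∃ α : V → Fin d, ∀ C ∈ G, ∃ p ∈ C, α p.1 ≠ p.2 := by
  classical
  have d0 : Fin d := ⟨0, by omega⟩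
  rcases G.eq_empty_or_nonempty with rfl | hGne
  · exact ⟨fun _ => d0, by simp⟩
  have hdR : (0:ℝ) < (d:ℝ) ^ k := by positivity
  set W : Finset V := G.sup (fun C => C.image Prod.fst) with hW
  set Ω : Finset (V → Fin d) :=
    (W.pi (fun _ => (Finset.univ : Finset (Fin d)))).image
      (fun g x => if h : x ∈ W then g x h else d0) with hΩ
  have memΩ : ∀ f : V → Fin d, f ∈ Ω ↔ ∀ x ∉ W, f x = d0 := by
    intro f
    constructor
    · rintro hf x hx
      obtain ⟨g, -, rfl⟩ := Finset.mem_image.mp hf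
      simp [dif_neg hx]
    · intro hf
      refine Finset.mem_image.mpr ⟨fun x _ => f x, ?_, ?_⟩
      · simp [Finset.mem_pi]
      · funext x
        by_cases hx : x ∈ W
        · simp [dif_pos hx]
        · simp [dif_neg hx, hf x hx]
  have hΩne : Ω.Nonempty := ⟨fun _ => d0, (memΩ _).mpr (fun _ _ => rfl)⟩
  obtain ⟨N, hN⟩ : ∃ N' : Finset (Finset (V × Fin d)) → ℕ,
      N' = fun T => (Ω.filter (fun f => ∀ C ∈ T, ∃ p ∈ C, f p.1 ≠ p.2)).card := ⟨_, rfl⟩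
  set Γ : Finset (V × Fin d) → Finset (Finset (V × Fin d)) :=
    fun C => G.filter (fun D => ¬ Disjoint (C.image Prod.fst) (D.image Prod.fst)) with hΓ
  obtain ⟨M, hM⟩ : ∃ M' : ℕ, M' = G.sup (fun C => (Γ C).card) := ⟨_, rfl⟩
  -- Γ-bound from degrees
  have hGam : ∀ C ∈ G,
      ((Γ C).card : ℝ)
        * Real.exp 1 ≤ (d:ℝ) ^ k := by
    intro C hC
    have hsub : Γ C
        ⊆ (C.image Prod.fst).biUnion (fun a => G.filter (fun D => a ∈ D.image Prod.fst)) := by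
      intro D hD
      simp only [hΓ, mem_filter] at hD
      obtain ⟨a, haC, haD⟩ := Finset.not_disjoint_iff.mp hD.2
      exact Finset.mem_biUnion.mpr ⟨a, haC, mem_filter.mpr ⟨hD.1, haD⟩⟩
    have h1 : ((Γ C).card : ℕ)
        ≤ ∑ a ∈ C.image Prod.fst, (G.filter (fun D => a ∈ D.image Prod.fst)).card :=
      le_trans (card_le_card hsub) card_biUnion_le
    have h2 : ∑ a ∈ C.image Prod.fst, ((G.filter (fun D => a ∈ D.image Prod.fst)).card : ℝ)
        ≤ ((C.image Prod.fst).card : ℝ) * ((d : ℝ) ^ k / (Real.exp 1 * k)) := by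
      have := Finset.sum_le_card_nsmul (C.image Prod.fst)
        (fun a => ((G.filter (fun D => a ∈ D.image Prod.fst)).card : ℝ))
        ((d : ℝ) ^ k / (Real.exp 1 * k)) (fun a _ => hdeg a)
      simpa [nsmul_eq_mul] using this
    have hkR : (0:ℝ) < (k:ℝ) := by exact_mod_cast hk
    have heR : (0:ℝ) < Real.exp 1 := Real.exp_pos 1
    have h1R : ((Γ C).card : ℝ)
        ≤ ((C.image Prod.fst).card : ℝ) * ((d : ℝ) ^ k / (Real.exp 1 * k)) := by
      refine le_trans ?_ h2
      exact_mod_cast Nat.cast_le.mpr h1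
    rw [hGcard C hC] at h1R
    have hkey2 : (k:ℝ) * ((d : ℝ) ^ k / (Real.exp 1 * k)) * Real.exp 1 = (d:ℝ)^k := by
      field_simp
    nlinarith [h1R, heR]
  have hM1 : 1 ≤ M := by
    obtain ⟨C, hC⟩ := hGne
    have hCne : (C.image Prod.fst).Nonempty := by
      rw [← Finset.card_pos, hGcard C hC]; omega
    have : C ∈ Γ C := by
      rw [hΓ]
      refine mem_filter.mpr ⟨hC, ?_⟩
      obtain ⟨a, ha⟩ := hCne
      exact fun h => (Finset.not_disjoint_iff.mpr ⟨a, ha, ha⟩) h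
    rw [hM]
    calc 1 ≤ (Γ C).card :=
        Finset.card_pos.mpr ⟨C, this⟩
      _ ≤ G.sup (fun C => (Γ C).card) := Finset.le_sup (f := fun C =>
          (Γ C).card) hC
  have hMe : (M : ℝ) * Real.exp 1 ≤ (d:ℝ) ^ k := by
    obtain ⟨C, hC, hCeq⟩ := Finset.exists_mem_eq_sup G hGne (fun C =>
      (Γ C).card)
    rw [hM, hCeq]
    exact hGam C hC
  set x : ℝ := if M = 1 then (2:ℝ)⁻¹ else (M:ℝ)⁻¹ with hx
  have hx0 : 0 < x := by
    rw [hx]; split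
    · norm_num
    · have h1 : (0:ℝ) < M := by exact_mod_cast hM1
      exact inv_pos.mpr h1
  have hx1 : x < 1 := by
    rw [hx]; split
    · norm_num
    · rename_i h
      have h2 : 2 ≤ M := by omega
      have : (1:ℝ) < M := by exact_mod_cast h2
      exact inv_lt_one_of_one_lt₀ this
  have hdk2 : (2:ℝ) ≤ (d:ℝ) ^ k := by
    calc (2:ℝ) ≤ (d:ℝ) := by exact_mod_cast hd
      _ ≤ (d:ℝ)^k := le_self_pow₀ (by exact_mod_cast (by omega : 1 ≤ d)) (by omega)
  have hkey : ((d:ℝ) ^ k)⁻¹ ≤ x * (1 - x) ^ (M - 1) := by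
    rw [hx]
    by_cases hM' : M = 1
    · rw [if_pos hM', hM']
      simp only [Nat.sub_self, pow_zero, mul_one]
      exact inv_anti₀ (by norm_num) hdk2
    · rw [if_neg hM']
      have h2 : 2 ≤ M := by omega
      set n : ℕ := M - 1 with hn
      have hn1 : 1 ≤ n := by omega
      have hMn : (M:ℝ) = (n:ℝ) + 1 := by
        rw [hn]; push_cast [Nat.cast_sub (by omega : 1 ≤ M)]; ring
      have hnR : (0:ℝ) < n := by exact_mod_cast hn1
      have hMR : (0:ℝ) < M := by exact_mod_cast hM1
      have hfrac : 1 - (M:ℝ)⁻¹ = (n:ℝ)/(M:ℝ) := by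
        rw [hMn]; field_simp; ring
      have hpow : ((Real.exp 1))⁻¹ ≤ ((n:ℝ)/(M:ℝ)) ^ n := by
        have hbig := csp_pow_le_exp n hn1
        have hid : (1 + 1/(n:ℝ)) = (M:ℝ)/(n:ℝ) := by rw [hMn]; field_simp
        rw [hid] at hbig
        have hpos : (0:ℝ) < ((M:ℝ)/(n:ℝ))^n := by positivity
        have : ((M:ℝ)/(n:ℝ))^n * ((n:ℝ)/(M:ℝ))^n = 1 := by
          rw [← mul_pow]; rw [div_mul_div_comm]
          rw [mul_comm (M:ℝ) (n:ℝ)]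
          rw [div_self (by positivity)]
          exact one_pow n
        calc (Real.exp 1)⁻¹ ≤ (((M:ℝ)/(n:ℝ))^n)⁻¹ :=
              inv_anti₀ hpos hbig
          _ = ((n:ℝ)/(M:ℝ))^n := inv_eq_of_mul_eq_one_right this
      have : (M:ℝ)⁻¹ * (Real.exp 1)⁻¹ ≤ (M:ℝ)⁻¹ * ((n:ℝ)/(M:ℝ))^n :=
        mul_le_mul_of_nonneg_left hpow (by positivity)
      calc ((d:ℝ)^k)⁻¹ ≤ ((M:ℝ) * Real.exp 1)⁻¹ := by
            apply inv_anti₀ (by positivity) hMe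
        _ = (M:ℝ)⁻¹ * (Real.exp 1)⁻¹ := by rw [mul_inv]
        _ ≤ (M:ℝ)⁻¹ * ((n:ℝ)/(M:ℝ))^n := this
        _ = (M:ℝ)⁻¹ * (1 - (M:ℝ)⁻¹)^(M-1) := by rw [hfrac, hn]
  -- the crucial counting step
  have step : ∀ n : ℕ, ∀ T ⊆ G, ∀ C ∈ G, C ∉ T → T.card < n →
      (1 - x) * (N T : ℝ) ≤ (N (insert C T) : ℝ) := by
    intro n
    induction n with
    | zero => intro T _ C _ _ h; omega
    | succ n ihn =>
      intro T hTG C hCG hCT hTn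
      set U : Finset (Finset (V × Fin d)) :=
        T.filter (fun D => Disjoint (C.image Prod.fst) (D.image Prod.fst)) with hU
      have hUT : U ⊆ T := filter_subset _ _
      have h1x : (0:ℝ) ≤ 1 - x := by linarith
      -- neighbour count inside T
      have hTU : T \ U = T.filter (fun D => ¬ Disjoint (C.image Prod.fst) (D.image Prod.fst)) := by
        rw [hU]
        exact (Finset.filter_not _ _).symm
      have hCΓ : C ∈ Γ C := by
        have hCne : (C.image Prod.fst).Nonempty := by
          apply Finset.card_pos.mp
          have h9 := hGcard C hCG
          omega
        obtain ⟨a, ha⟩ := hCne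
        rw [hΓ]
        exact mem_filter.mpr ⟨hCG, fun h => (Finset.not_disjoint_iff.mpr ⟨a, ha, ha⟩) h⟩
      have hm0M : (T \ U).card ≤ M - 1 := by
        have hsubΓ : T \ U ⊆
            (Γ C).erase C := by
          intro D hD
          rw [hTU, Finset.mem_filter] at hD
          refine Finset.mem_erase.mpr ⟨fun h => hCT (h ▸ hD.1), ?_⟩
          rw [hΓ]
          exact Finset.mem_filter.mpr ⟨hTG hD.1, hD.2⟩
        calc (T \ U).card
            ≤ ((Γ C).erase C).card :=
              Finset.card_le_card hsubΓ
          _ = (Γ C).card - 1 :=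
              Finset.card_erase_of_mem hCΓ
          _ ≤ M - 1 := by
              rw [hM]
              exact Nat.sub_le_sub_right (Finset.le_sup (f := fun C =>
                (Γ C).card) hCG) 1
      have hpm : (1 - x) ^ (M - 1) ≤ (1 - x) ^ ((T \ U).card) :=
        pow_le_pow_of_le_one h1x (by linarith) hm0M
      -- chain lemma: adding back neighbours one at a time
      have chain : ∀ m : ℕ, ∀ R : Finset (Finset (V × Fin d)), (R \ U).card ≤ m →
          U ⊆ R → R ⊆ T → (1 - x) ^ ((R \ U).card) * (N U : ℝ) ≤ (N R : ℝ) := by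
        intro m
        induction m with
        | zero =>
          intro R hRm hUR hRT
          have hempty : R \ U = ∅ := card_eq_zero.mp (le_antisymm hRm (Nat.zero_le _))
          have hRU : R = U := by
            apply Finset.Subset.antisymm _ hUR
            intro a ha
            by_contra hna
            exact (Finset.notMem_empty a) (hempty ▸ Finset.mem_sdiff.mpr ⟨ha, hna⟩)
          rw [hRU]
          simp
        | succ m ihm =>
          intro R hRm hUR hRT
          rcases (R \ U).eq_empty_or_nonempty with hempty | ⟨D, hD⟩
          · have hRU : R = U := by
              apply Finset.Subset.antisymm _ hUR
              intro a ha
              by_contra hna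
              exact (Finset.notMem_empty a) (hempty ▸ Finset.mem_sdiff.mpr ⟨ha, hna⟩)
            rw [hRU]
            simp
          · have hDR : D ∈ R := (Finset.mem_sdiff.mp hD).1
            have hDU : D ∉ U := (Finset.mem_sdiff.mp hD).2
            have hUR' : U ⊆ R.erase D :=
              fun a ha => Finset.mem_erase.mpr ⟨fun h => hDU (h ▸ ha), hUR ha⟩
            have hR'T : R.erase D ⊆ T := (Finset.erase_subset _ _).trans hRT
            have hcard' : (R.erase D \ U).card + 1 = (R \ U).card := by
              rw [Finset.erase_sdiff_comm]
              exact Finset.card_erase_add_one hD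
            have hstep : (1 - x) * (N (R.erase D) : ℝ) ≤ (N (insert D (R.erase D)) : ℝ) := by
              apply ihn (R.erase D) (hR'T.trans hTG) D (hTG (hRT hDR))
                (Finset.notMem_erase _ _)
              calc (R.erase D).card < R.card := Finset.card_erase_lt_of_mem hDR
                _ ≤ T.card := Finset.card_le_card hRT
                _ ≤ n := by omega
            have hins : insert D (R.erase D) = R := Finset.insert_erase hDR
            have hihm : (1 - x) ^ ((R.erase D \ U).card) * (N U : ℝ) ≤ (N (R.erase D) : ℝ) :=
              ihm (R.erase D) (by omega) hUR' hR'T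
            calc (1 - x) ^ ((R \ U).card) * (N U : ℝ)
                = (1 - x) * ((1 - x) ^ ((R.erase D \ U).card) * (N U : ℝ)) := by
                  rw [← hcard', pow_succ]; ring
              _ ≤ (1 - x) * (N (R.erase D) : ℝ) := by
                  exact mul_le_mul_of_nonneg_left hihm h1x
              _ ≤ (N (insert D (R.erase D)) : ℝ) := hstep
              _ = (N R : ℝ) := by rw [hins]
      -- splitting N T
      have hsplit : ((Ω.filter (fun f => ∀ D ∈ T, ∃ p ∈ D, f p.1 ≠ p.2)).filter
            (fun f => ∃ p ∈ C, f p.1 ≠ p.2)).card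
          + ((Ω.filter (fun f => ∀ D ∈ T, ∃ p ∈ D, f p.1 ≠ p.2)).filter
            (fun f => ¬ ∃ p ∈ C, f p.1 ≠ p.2)).card
          = N T := by
        simp only [hN]
        exact Finset.card_filter_add_card_filter_not _
      have hNins : N (insert C T) = ((Ω.filter (fun f => ∀ D ∈ T, ∃ p ∈ D, f p.1 ≠ p.2)).filter
            (fun f => ∃ p ∈ C, f p.1 ≠ p.2)).card := by
        simp only [hN, Finset.filter_filter]
        congr 1
        apply Finset.filter_congr
        intro f _
        simp only [Finset.forall_mem_insert]
        tauto
      obtain ⟨bad, hbad⟩ : ∃ b, b = (Ω.filter (fun f => ∀ D ∈ T, ∃ p ∈ D, f p.1 ≠ p.2)).filter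
            (fun f => ¬ ∃ p ∈ C, f p.1 ≠ p.2) := ⟨_, rfl⟩
      obtain ⟨R0, hR0⟩ : ∃ r, r = Ω.filter
            (fun f => (∀ D ∈ U, ∃ p ∈ D, f p.1 ≠ p.2) ∧ ¬ ∃ p ∈ C, f p.1 ≠ p.2) := ⟨_, rfl⟩
      rw [← hbad] at hsplit
      have hbadR0 : bad ⊆ R0 := by
        rw [hbad, hR0, Finset.filter_filter]
        intro f hf
        rw [Finset.mem_filter] at hf ⊢
        exact ⟨hf.1, fun D hD => hf.2.1 D (hUT hD), hf.2.2⟩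
      have hWC : (C.image Prod.fst) ⊆ W :=
        Finset.le_sup (f := fun C => C.image Prod.fst) hCG
      -- the injection
      have hinj : R0.card * d ^ k
          ≤ (Ω.filter (fun f => ∀ D ∈ U, ∃ p ∈ D, f p.1 ≠ p.2)).card := by
        have hcardpi : (((C.image Prod.fst)).pi
            (fun _ => (Finset.univ : Finset (Fin d)))).card = d ^ k := by
          rw [Finset.card_pi]
          simp [hGcard C hCG]
        rw [← hcardpi, ← Finset.card_product]
        apply Finset.card_le_card_of_injOn
          (fun q x => if h : x ∈ C.image Prod.fst then q.2 x h else q.1 x)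
        · rintro ⟨f, g⟩ hq
          rw [Finset.mem_coe, Finset.mem_product] at hq
          obtain ⟨hfR0, hg⟩ := hq
          rw [hR0, Finset.mem_filter] at hfR0
          obtain ⟨hfΩ, hfU, hfC⟩ := hfR0
          rw [Finset.mem_coe, Finset.mem_filter]
          constructor
          · rw [memΩ]
            intro y hy
            simp only []
            rw [dif_neg (fun hyC => hy (hWC hyC))]
            exact (memΩ f).mp hfΩ y hy
          · intro D hD
            obtain ⟨p, hp, hne⟩ := hfU D hD
            refine ⟨p, hp, ?_⟩
            have hpD : p.1 ∈ D.image Prod.fst := Finset.mem_image_of_mem _ hp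
            have hdisjCD : Disjoint (C.image Prod.fst) (D.image Prod.fst) :=
              (Finset.mem_filter.mp hD).2
            have hnC : p.1 ∉ C.image Prod.fst :=
              fun hh => (Finset.not_disjoint_iff.mpr ⟨p.1, hh, hpD⟩) hdisjCD
            simp only []
            rw [dif_neg hnC]
            exact hne
        · rintro ⟨f, g⟩ hq ⟨f', g'⟩ hq' heq
          rw [Finset.mem_coe, Finset.mem_product] at hq hq'
          obtain ⟨hfR0, hgpi⟩ := hq
          obtain ⟨hfR0', hgpi'⟩ := hq'
          rw [hR0, Finset.mem_filter] at hfR0 hfR0'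
          have hviol : ∀ p ∈ C, f p.1 = p.2 := by
            have := hfR0.2.2
            push_neg at this
            exact this
          have hviol' : ∀ p ∈ C, f' p.1 = p.2 := by
            have := hfR0'.2.2
            push_neg at this
            exact this
          have hff : f = f' := by
            funext y
            by_cases hy : y ∈ C.image Prod.fst
            · obtain ⟨p, hp, hpy⟩ := Finset.mem_image.mp hy
              rw [← hpy, hviol p hp, hviol' p hp]
            · have := congrFun heq y
              simpa only [dif_neg hy] using this
          have hgg : g = g' := by
            funext a h
            have := congrFun heq a
            simpa only [dif_pos h] using this
          simp [Prod.ext_iff]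
          exact ⟨hff, hgg⟩
      have chainT : (1 - x) ^ ((T \ U).card) * (N U : ℝ) ≤ (N T : ℝ) :=
        chain (T \ U).card T le_rfl hUT (Finset.Subset.refl T)
      have hNUeq : (Ω.filter (fun f => ∀ D ∈ U, ∃ p ∈ D, f p.1 ≠ p.2)).card = N U := by
        simp only [hN]
      have hbadx : (bad.card : ℝ) ≤ x * (N T : ℝ) := by
        have h1 : (R0.card : ℝ) ≤ (N U : ℝ) * ((d:ℝ)^k)⁻¹ := by
          rw [← div_eq_mul_inv, le_div_iff₀ hdR]
          have h9 : ((R0.card * d ^ k : ℕ) : ℝ) ≤ ((N U : ℕ) : ℝ) :=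
            Nat.cast_le.mpr (hNUeq ▸ hinj)
          rw [Nat.cast_mul, Nat.cast_pow] at h9
          exact h9
        have h2 : ((d:ℝ)^k)⁻¹ ≤ x * (1 - x) ^ ((T \ U).card) :=
          hkey.trans (mul_le_mul_of_nonneg_left hpm hx0.le)
        calc (bad.card : ℝ) ≤ (R0.card : ℝ) :=
              Nat.cast_le.mpr (Finset.card_le_card hbadR0)
          _ ≤ (N U : ℝ) * ((d:ℝ)^k)⁻¹ := h1
          _ ≤ (N U : ℝ) * (x * (1 - x) ^ ((T \ U).card)) := by
              exact mul_le_mul_of_nonneg_left h2 (Nat.cast_nonneg _)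
          _ = x * ((1 - x) ^ ((T \ U).card) * (N U : ℝ)) := by ring
          _ ≤ x * (N T : ℝ) := mul_le_mul_of_nonneg_left chainT hx0.le
      have hNdiff : (N (insert C T) : ℝ) + (bad.card : ℝ) = (N T : ℝ) := by
        rw [hNins]
        rw [← Nat.cast_add]
        exact congrArg _ hsplit
      linarith
  -- positivity
  have posempty : 0 < N ∅ := by
    have hfe : (Ω.filter (fun f => ∀ C ∈ (∅ : Finset (Finset (V × Fin d))), ∃ p ∈ C, f p.1 ≠ p.2))
        = Ω := by
      apply Finset.filter_true_of_mem
      intro f _ C hC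
      exact absurd hC (Finset.notMem_empty C)
    simp only [hN, hfe]
    exact Finset.card_pos.mpr hΩne
  have pos : ∀ n : ℕ, ∀ T ⊆ G, T.card ≤ n → 0 < N T := by
    intro n
    induction n with
    | zero =>
      intro T _ hT0
      have : T = ∅ := card_eq_zero.mp (le_antisymm hT0 (Nat.zero_le _))
      rw [this]
      exact posempty
    | succ n ihn =>
      intro T hTG hTn
      rcases T.eq_empty_or_nonempty with rfl | ⟨C, hC⟩
      · exact posempty
      · have hsub : T.erase C ⊆ G := (Finset.erase_subset _ _).trans hTG
        have h1 := step T.card (T.erase C) hsub C (hTG hC) (Finset.notMem_erase _ _)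
          (Finset.card_erase_lt_of_mem hC)
        have h2 : 0 < N (T.erase C) := by
          apply ihn _ hsub
          have := Finset.card_erase_add_one hC
          omega
        have hins : insert C (T.erase C) = T := Finset.insert_erase hC
        rw [← hins]
        have hx' : (0:ℝ) < 1 - x := by linarith
        have h4 : (0:ℝ) < (1 - x) * (N (T.erase C) : ℝ) :=
          mul_pos hx' (Nat.cast_pos.mpr h2)
        exact Nat.cast_pos.mp (lt_of_lt_of_le h4 h1)
  have hpos := pos G.card G (Finset.Subset.refl G) le_rfl
  simp only [hN] at hpos
  obtain ⟨f, hf⟩ := Finset.card_pos.mp hpos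
  rw [Finset.mem_filter] at hf
  exact ⟨f, hf.2⟩

/-- An ℓ-disjoint (k,d)-CSP with at most (d^k/(e·d^{ℓ-1}·k))^{1/(ℓ-1)} frequent
variables is satisfiable, where x is frequent if deg(x,F) > d^k/(e·d^{ℓ-1}·k).
The finite set S collects all frequent variables. -/

theorem stmt7 {V : Type*} [DecidableEq V] (k d ℓ : ℕ) (hℓ : 2 ≤ ℓ) (hlk : ℓ ≤ k)
    (hd : 2 ≤ d)
    (F : Finset (Finset (V × Fin d)))
    (hcard : ∀ C ∈ F, C.card = k ∧ (C.image Prod.fst).card = k)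
    (hdisj : ∀ C ∈ F, ∀ D ∈ F, C ≠ D → ((C.image Prod.fst) ∩ (D.image Prod.fst)).card < ℓ)
    (S : Finset V)
    (hS : ∀ x : V,
      (d : ℝ) ^ k / (Real.exp 1 * (d : ℝ) ^ (ℓ - 1) * k)
        < ((F.filter (fun C => x ∈ C.image Prod.fst)).card : ℝ) → x ∈ S)
    (hScard : (S.card : ℝ)
      ≤ ((d : ℝ) ^ k / (Real.exp 1 * (d : ℝ) ^ (ℓ - 1) * k)) ^ (((ℓ : ℝ) - 1)⁻¹)) :
    ∃ α : V → Fin d, ∀ C ∈ F, ∃ p ∈ C, α p.1 ≠ p.2 := by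
  classical
  set t : ℝ := (d : ℝ) ^ k / (Real.exp 1 * (d : ℝ) ^ (ℓ - 1) * k) with ht
  set k' : ℕ := k - (ℓ - 1) with hk'
  have hk'1 : 1 ≤ k' := by omega
  have hk'k : k' ≤ k := by omega
  have hepos : (0:ℝ) < Real.exp 1 := Real.exp_pos 1
  have hdRpos : (0:ℝ) < (d:ℝ) := by
    have : (0:ℕ) < d := by omega
    exact_mod_cast this
  have hkpos : (0:ℝ) < (k:ℝ) := by
    have : (0:ℕ) < k := by omega
    exact_mod_cast this
  have hk'pos : (0:ℝ) < (k':ℝ) := by exact_mod_cast hk'1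
  have hsplitpow : (d:ℝ)^k = (d:ℝ)^(ℓ-1) * (d:ℝ)^k' := by
    rw [← pow_add]
    congr 1
    omega
  have htval : t = (d:ℝ)^k' / (Real.exp 1 * k) := by
    rw [ht, hsplitpow]
    rw [div_eq_div_iff (by positivity) (by positivity)]
    ring
  have ht0 : (0:ℝ) ≤ t := by rw [ht]; positivity
  have htD : t ≤ (d:ℝ)^k' / (Real.exp 1 * k') := by
    rw [htval]
    apply div_le_div_of_nonneg_left (by positivity) (by positivity)
    have : (k':ℝ) ≤ (k:ℝ) := by exact_mod_cast hk'k
    nlinarith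
  -- the frequent-set power bound
  have hSpow : ((S.card : ℝ)) ^ (ℓ - 1) ≤ t := by
    have h1 : ((S.card:ℝ)) ^ (ℓ-1) ≤ (t ^ (((ℓ:ℝ)-1)⁻¹)) ^ (ℓ-1) :=
      pow_le_pow_left₀ (Nat.cast_nonneg _) hScard _
    have h2 : (t ^ (((ℓ:ℝ)-1)⁻¹)) ^ (ℓ-1) = t := by
      rw [← Real.rpow_natCast (t ^ (((ℓ:ℝ)-1)⁻¹)) (ℓ-1), ← Real.rpow_mul ht0]
      have hcast : ((ℓ-1 : ℕ) : ℝ) = (ℓ:ℝ) - 1 := by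
        push_cast [Nat.cast_sub (by omega : 1 ≤ ℓ)]
        ring
      rw [hcast, inv_mul_cancel₀ (by
        have : (2:ℝ) ≤ (ℓ:ℝ) := by exact_mod_cast hℓ
        nlinarith), Real.rpow_one]
    rw [h2] at h1
    exact h1
  -- selection of truncated constraints
  have hex : ∀ C ∈ F, ∃ E : Finset (V × Fin d), E ⊆ C ∧ E.card = k' ∧
      (∀ x ∈ S, x ∈ E.image Prod.fst → ℓ ≤ ((C.image Prod.fst) ∩ S).card) := by
    intro C hC
    obtain ⟨hcc, hci⟩ := hcard C hC
    have hinjOn : Set.InjOn Prod.fst (↑C : Set (V × Fin d)) := by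
      apply Finset.card_image_iff.mp
      rw [hci, hcc]
    have hsum : (C.filter (fun p => p.1 ∈ S)).card
        + (C.filter (fun p => ¬ p.1 ∈ S)).card = k := by
      rw [Finset.card_filter_add_card_filter_not, hcc]
    by_cases hlight : k' ≤ (C.filter (fun p => ¬ p.1 ∈ S)).card
    · obtain ⟨E, hEsub, hEcard⟩ := Finset.exists_subset_card_eq hlight
      refine ⟨E, hEsub.trans (Finset.filter_subset _ _), hEcard, ?_⟩
      intro x hxS hxE
      exfalso
      obtain ⟨p, hp, hpx⟩ := Finset.mem_image.mp hxE
      have := (Finset.mem_filter.mp (hEsub hp)).2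
      exact this (hpx ▸ hxS)
    · push_neg at hlight
      have hFR : k' - (C.filter (fun p => ¬ p.1 ∈ S)).card
          ≤ (C.filter (fun p => p.1 ∈ S)).card := by omega
      obtain ⟨A, hAsub, hAcard⟩ := Finset.exists_subset_card_eq hFR
      have hdisjNA : Disjoint (C.filter (fun p => ¬ p.1 ∈ S)) A := by
        apply Finset.disjoint_left.mpr
        intro p hp hpA
        exact (Finset.mem_filter.mp hp).2 (Finset.mem_filter.mp (hAsub hpA)).2
      refine ⟨(C.filter (fun p => ¬ p.1 ∈ S)) ∪ A, ?_, ?_, ?_⟩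
      · apply Finset.union_subset (Finset.filter_subset _ _) (hAsub.trans (Finset.filter_subset _ _))
      · rw [Finset.card_union_of_disjoint hdisjNA, hAcard]
        omega
      · intro x hxS hxE
        -- C is heavy
        have hheavy : ℓ ≤ (C.filter (fun p => p.1 ∈ S)).card := by omega
        have himg : (C.filter (fun p => p.1 ∈ S)).image Prod.fst
            ⊆ (C.image Prod.fst) ∩ S := by
          intro y hy
          obtain ⟨p, hp, hpy⟩ := Finset.mem_image.mp hy
          have hp' := Finset.mem_filter.mp hp
          exact Finset.mem_inter.mpr ⟨Finset.mem_image.mpr ⟨p, hp'.1, hpy⟩, hpy ▸ hp'.2⟩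
        have hcardim : ((C.filter (fun p => p.1 ∈ S)).image Prod.fst).card
            = (C.filter (fun p => p.1 ∈ S)).card := by
          apply Finset.card_image_of_injOn
          exact hinjOn.mono (by exact_mod_cast Finset.filter_subset _ C)
        calc ℓ ≤ (C.filter (fun p => p.1 ∈ S)).card := hheavy
          _ = ((C.filter (fun p => p.1 ∈ S)).image Prod.fst).card := hcardim.symm
          _ ≤ ((C.image Prod.fst) ∩ S).card := Finset.card_le_card himg
  -- build the truncated system
  set sel : {C // C ∈ F} → Finset (V × Fin d) := fun C => (hex C.1 C.2).choose with hsel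
  have hselsub : ∀ C : {C // C ∈ F}, sel C ⊆ C.1 := fun C => (hex C.1 C.2).choose_spec.1
  have hselcard : ∀ C : {C // C ∈ F}, (sel C).card = k' :=
    fun C => (hex C.1 C.2).choose_spec.2.1
  have hselheavy : ∀ C : {C // C ∈ F}, ∀ x ∈ S, x ∈ (sel C).image Prod.fst →
      ℓ ≤ ((C.1.image Prod.fst) ∩ S).card :=
    fun C => (hex C.1 C.2).choose_spec.2.2
  set G : Finset (Finset (V × Fin d)) := F.attach.image sel with hG
  have hinjOnF : ∀ C : {C // C ∈ F}, Set.InjOn Prod.fst (↑C.1 : Set (V × Fin d)) := by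
    intro C
    apply Finset.card_image_iff.mp
    rw [(hcard C.1 C.2).2, (hcard C.1 C.2).1]
  have hGcard : ∀ E ∈ G, (E.image Prod.fst).card = k' := by
    intro E hE
    obtain ⟨C, -, rfl⟩ := Finset.mem_image.mp hE
    rw [Finset.card_image_of_injOn ((hinjOnF C).mono (by exact_mod_cast hselsub C)), hselcard C]
  have himgsub : ∀ C : {C // C ∈ F}, (sel C).image Prod.fst ⊆ C.1.image Prod.fst :=
    fun C => Finset.image_subset_image (hselsub C)
  -- degree bound
  have hdeg : ∀ x : V, ((G.filter (fun D => x ∈ D.image Prod.fst)).card : ℝ)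
      ≤ (d : ℝ) ^ k' / (Real.exp 1 * k') := by
    intro x
    have hstep1 : (G.filter (fun D => x ∈ D.image Prod.fst)).card
        ≤ (F.attach.filter (fun C => x ∈ (sel C).image Prod.fst)).card := by
      rw [hG, Finset.filter_image]
      exact Finset.card_image_le
    by_cases hxS : x ∈ S
    · -- frequent variable: use ℓ-disjointness
      have hstep2 : (F.attach.filter (fun C => x ∈ (sel C).image Prod.fst)).card
          ≤ ((S.erase x).powersetCard (ℓ-1)).card := by
        apply Finset.card_le_card_of_injOn (fun C =>
          if h : ℓ - 1 ≤ (((C.1.image Prod.fst) ∩ S).erase x).card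
          then (Finset.exists_subset_card_eq h).choose else ∅)
        · intro C hC
          simp only [Finset.mem_coe] at hC ⊢
          rw [Finset.mem_filter] at hC
          have hheavy := hselheavy C x hxS hC.2
          have hble : ℓ - 1 ≤ (((C.1.image Prod.fst) ∩ S).erase x).card := by
            have h9 : ((C.1.image Prod.fst) ∩ S).card - 1
                ≤ (((C.1.image Prod.fst) ∩ S).erase x).card :=
              Finset.pred_card_le_card_erase
            omega
          rw [dif_pos hble]
          obtain ⟨hsub9, hcard9⟩ := (Finset.exists_subset_card_eq hble).choose_spec
          apply Finset.mem_powersetCard.mpr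
          constructor
          · exact hsub9.trans (Finset.erase_subset_erase x (Finset.inter_subset_right))
          · exact hcard9
        · intro C hC C' hC' heq
          rw [Finset.mem_coe, Finset.mem_filter] at hC hC'
          by_contra hne
          have hne1 : C.1 ≠ C'.1 := fun h => hne (Subtype.ext h)
          have hble : ℓ - 1 ≤ (((C.1.image Prod.fst) ∩ S).erase x).card := by
            have h9 : ((C.1.image Prod.fst) ∩ S).card - 1
                ≤ (((C.1.image Prod.fst) ∩ S).erase x).card :=
              Finset.pred_card_le_card_erase
            have := hselheavy C x hxS hC.2
            omega
          have hble' : ℓ - 1 ≤ (((C'.1.image Prod.fst) ∩ S).erase x).card := by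
            have h9 : ((C'.1.image Prod.fst) ∩ S).card - 1
                ≤ (((C'.1.image Prod.fst) ∩ S).erase x).card :=
              Finset.pred_card_le_card_erase
            have := hselheavy C' x hxS hC'.2
            omega
          simp only [] at heq
          rw [dif_pos hble, dif_pos hble'] at heq
          obtain ⟨hsub9, hcard9⟩ := (Finset.exists_subset_card_eq hble).choose_spec
          obtain ⟨hsub9', hcard9'⟩ := (Finset.exists_subset_card_eq hble').choose_spec
          set T0 := (Finset.exists_subset_card_eq hble).choose with hT0
          have hxT0 : x ∉ T0 := fun hx =>
            (Finset.notMem_erase x _) (hsub9 hx)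
          have hco : insert x T0 ⊆ (C.1.image Prod.fst) ∩ (C'.1.image Prod.fst) := by
            apply Finset.insert_subset
            · exact Finset.mem_inter.mpr ⟨himgsub C hC.2, himgsub C' hC'.2⟩
            · intro y hy
              have hy1 : y ∈ (C.1.image Prod.fst) :=
                (Finset.mem_inter.mp (Finset.mem_of_mem_erase (hsub9 hy))).1
              have hy2 : y ∈ (C'.1.image Prod.fst) := by
                have := hsub9' (heq ▸ hy)
                exact (Finset.mem_inter.mp (Finset.mem_of_mem_erase this)).1
              exact Finset.mem_inter.mpr ⟨hy1, hy2⟩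
          have hcardins : (insert x T0).card = ℓ := by
            rw [Finset.card_insert_of_notMem hxT0, hcard9]
            omega
          have := Finset.card_le_card hco
          rw [hcardins] at this
          exact absurd (hdisj C.1 C.2 C'.1 C'.2 hne1) (by omega)
      have hstep3 : (((S.erase x).powersetCard (ℓ-1)).card : ℝ) ≤ t := by
        rw [Finset.card_powersetCard]
        calc (((S.erase x).card.choose (ℓ-1)) : ℝ)
            ≤ ((S.card.choose (ℓ-1)) : ℝ) := by
              exact_mod_cast Nat.choose_le_choose (ℓ-1)
                (Finset.card_le_card (Finset.erase_subset x S))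
          _ ≤ ((S.card ^ (ℓ-1) : ℕ) : ℝ) := by
              exact_mod_cast Nat.choose_le_pow S.card (ℓ-1)
          _ = ((S.card : ℝ)) ^ (ℓ-1) := by push_cast; ring
          _ ≤ t := hSpow
      calc ((G.filter (fun D => x ∈ D.image Prod.fst)).card : ℝ)
          ≤ ((F.attach.filter (fun C => x ∈ (sel C).image Prod.fst)).card : ℝ) := by
            exact_mod_cast hstep1
        _ ≤ (((S.erase x).powersetCard (ℓ-1)).card : ℝ) := by exact_mod_cast hstep2
        _ ≤ t := hstep3
        _ ≤ (d : ℝ) ^ k' / (Real.exp 1 * k') := htD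
    · -- infrequent variable: small degree in F
      have hstep2 : (F.attach.filter (fun C => x ∈ (sel C).image Prod.fst)).card
          ≤ (F.filter (fun C => x ∈ C.image Prod.fst)).card := by
        apply Finset.card_le_card_of_injOn (fun C => C.1)
        · intro C hC
          rw [Finset.mem_coe, Finset.mem_filter] at hC
          exact Finset.mem_filter.mpr ⟨C.2, himgsub C hC.2⟩
        · intro C _ C' _ h
          exact Subtype.ext h
      have hdegF : ((F.filter (fun C => x ∈ C.image Prod.fst)).card : ℝ) ≤ t :=
        not_lt.mp (fun hlt => hxS (hS x hlt))
      calc ((G.filter (fun D => x ∈ D.image Prod.fst)).card : ℝ)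
          ≤ ((F.attach.filter (fun C => x ∈ (sel C).image Prod.fst)).card : ℝ) := by
            exact_mod_cast hstep1
        _ ≤ ((F.filter (fun C => x ∈ C.image Prod.fst)).card : ℝ) := by exact_mod_cast hstep2
        _ ≤ t := hdegF
        _ ≤ (d : ℝ) ^ k' / (Real.exp 1 * k') := htD
  obtain ⟨α, hα⟩ := csp_base d k' hd hk'1 G hGcard hdeg
  refine ⟨α, ?_⟩
  intro C hC
  have hmem : sel ⟨C, hC⟩ ∈ G := by
    rw [hG]
    exact Finset.mem_image.mpr ⟨⟨C, hC⟩, Finset.mem_attach _ _, rfl⟩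
  obtain ⟨p, hp, hne⟩ := hα _ hmem
  exact ⟨p, hselsub ⟨C, hC⟩ hp, hne⟩
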